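/- Let s, d ≥ 1, let ℬ be a finite index set, and let β_{k,j,b} ∈ ℂ^d for k, j ∈ {0,…,s−1} and b ∈ ℬ be vectors satisfying, for every k, the completeness relation Σ_{b∈ℬ} Σ_{j=0}^{s−1} |β_{k,j,b}⟩⟨β_{k,j,b}| = I_d. Define the operators M_{b,t} : ℂ^d → ℂ^s by M_{b,t} = (1/s)·Σ_{j=0}^{s−1} Σ_{k=0}^{s−1} e^{2πi t k/s} |j⟩⟨β_{k,j,b}|, for b ∈ ℬ and t ∈ {0,…,s−1}. Then Σ_{b∈ℬ} Σ_{t=0}^{s−1} M_{b,t}† M_{b,t} = I_d, i.e., the M_{b,t} are the Kraus operators of a complete measurement. -/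

import Mathlib

open Matrix Complex
open scoped Matrix

noncomputable section

/-- The operator M_{b,t} = (1/s)·Σ_{j,k} e^{2πitk/s}|j⟩⟨β_{k,j,b}|. -/
def Mop {s d : ℕ} {B : Type*} (β : Fin s → Fin s → B → (Fin d → ℂ)) (b : B) (t : Fin s) :
    Matrix (Fin s) (Fin d) ℂ :=
  ((s : ℂ))⁻¹ • ∑ j : Fin s, ∑ k : Fin s,
    Complex.exp (2 * (Real.pi : ℂ) * I * ((t : ℕ) : ℂ) * ((k : ℕ) : ℂ) / (s : ℂ)) •
      Matrix.vecMulVec (fun r => if r = j then (1 : ℂ) else 0) (star (β k j b))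

lemma Mop_apply {s d : ℕ} {B : Type*} (β : Fin s → Fin s → B → (Fin d → ℂ)) (b : B)
    (t m : Fin s) (i : Fin d) :
    Mop β b t m i = (s : ℂ)⁻¹ * ∑ k : Fin s,
      Complex.exp (2 * (Real.pi : ℂ) * I * ((t : ℕ) : ℂ) * ((k : ℕ) : ℂ) / (s : ℂ)) *
        (starRingEnd ℂ) (β k m b i) := by
  unfold Mop
  simp only [Matrix.smul_apply, Matrix.sum_apply, Matrix.vecMulVec_apply, Pi.star_apply,
    smul_eq_mul, Matrix.of_apply]
  rw [Finset.sum_comm]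
  congr 1
  refine Finset.sum_congr rfl fun k _ => ?_
  rw [Finset.sum_eq_single m]
  · simp [Complex.star_def]
  · intro j _ hj; simp [Ne.symm hj]
  · simp

lemma exp_sum_key (s : ℕ) (hs : 1 ≤ s) (k k' : Fin s) :
    ∑ t : Fin s, (starRingEnd ℂ) (Complex.exp (2 * (Real.pi:ℂ) * I * ((t:ℕ):ℂ) * ((k:ℕ):ℂ) / s)) *
      Complex.exp (2 * (Real.pi:ℂ) * I * ((t:ℕ):ℂ) * ((k':ℕ):ℂ) / s)
      = if k = k' then (s : ℂ) else 0 := by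
  have hs0 : (s : ℂ) ≠ 0 := by exact_mod_cast (Nat.pos_of_ne_zero (by omega)).ne'
  have hpi : (Real.pi : ℂ) ≠ 0 := by exact_mod_cast Real.pi_ne_zero
  have h2pi : (2 * (Real.pi:ℂ) * I) ≠ 0 := by simp [hpi, I_ne_zero]
  set c : ℂ := 2 * (Real.pi:ℂ) * I * (((k':ℕ):ℂ) - ((k:ℕ):ℂ)) / s with hc
  have hterm : ∀ t : Fin s,
      (starRingEnd ℂ) (Complex.exp (2 * (Real.pi:ℂ) * I * ((t:ℕ):ℂ) * ((k:ℕ):ℂ) / s)) *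
      Complex.exp (2 * (Real.pi:ℂ) * I * ((t:ℕ):ℂ) * ((k':ℕ):ℂ) / s) = (Complex.exp c) ^ (t:ℕ) := by
    intro t
    rw [← Complex.exp_conj, ← Complex.exp_add, ← Complex.exp_nat_mul]
    congr 1
    have hconj : (starRingEnd ℂ) (2 * (Real.pi:ℂ) * I * ((t:ℕ):ℂ) * ((k:ℕ):ℂ) / s)
        = -(2 * (Real.pi:ℂ) * I * ((t:ℕ):ℂ) * ((k:ℕ):ℂ) / s) := by
      simp only [map_div₀, _root_.map_mul, Complex.conj_I, Complex.conj_ofReal,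
        Complex.conj_natCast, map_ofNat]
      ring
    rw [hconj, hc]
    field_simp
    ring
  simp only [hterm]
  rw [Fin.sum_univ_eq_sum_range (fun i => (Complex.exp c) ^ i)]
  by_cases h : k = k'
  · subst h
    simp [hc]
  · have hne : Complex.exp c ≠ 1 := by
      intro hn
      rw [Complex.exp_eq_one_iff] at hn
      obtain ⟨n, hn⟩ := hn
      rw [hc, div_eq_iff hs0] at hn
      have h2 : (((k':ℕ):ℂ) - ((k:ℕ):ℂ)) = n * s := by
        apply mul_left_cancel₀ h2pi
        linear_combination hn
      have h3 : ((k':ℕ):ℤ) - ((k:ℕ):ℤ) = n * s := by exact_mod_cast h2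
      have hk : (k:ℕ) ≠ (k':ℕ) := fun hkk => h (Fin.ext hkk)
      have hk1 : (k:ℕ) < s := k.isLt
      have hk2 : (k':ℕ) < s := k'.isLt
      have hn0 : n ≠ 0 := by rintro rfl; simp at h3; omega
      have habs : |((k':ℕ):ℤ) - ((k:ℕ):ℤ)| < s := by rw [abs_lt]; omega
      rw [h3, abs_mul, Int.abs_natCast] at habs
      nlinarith [Int.one_le_abs hn0, (Int.natCast_pos.mpr (by omega : 0 < s))]
    rw [geom_sum_eq hne]
    have hpow : Complex.exp c ^ s = 1 := by
      rw [← Complex.exp_nat_mul, Complex.exp_eq_one_iff]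
      refine ⟨(k':ℤ) - (k:ℤ), ?_⟩
      rw [hc]
      field_simp
      push_cast
      ring
    rw [hpow]
    simp [h]

/-- If the vectors β_{k,j,b} satisfy the completeness relation
Σ_b Σ_j |β_{k,j,b}⟩⟨β_{k,j,b}| = I for every k, then the operators M_{b,t} are the Kraus
operators of a complete measurement: Σ_{b,t} M_{b,t}† M_{b,t} = I. -/
theorem Mop_complete_measurement (s d : ℕ) (hs : 1 ≤ s) (hd : 1 ≤ d)
    (B : Type*) [Fintype B] (β : Fin s → Fin s → B → (Fin d → ℂ))
    (hcomp : ∀ k : Fin s,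
      ∑ b : B, ∑ j : Fin s, Matrix.vecMulVec (β k j b) (star (β k j b)) = 1) :
    ∑ b : B, ∑ t : Fin s, (Mop β b t)ᴴ * Mop β b t = 1 := by
  have hs0 : (s : ℂ) ≠ 0 := by exact_mod_cast (Nat.pos_of_ne_zero (by omega)).ne'
  set E : Fin s → Fin s → ℂ := fun t k =>
    Complex.exp (2 * (Real.pi:ℂ) * I * ((t:ℕ):ℂ) * ((k:ℕ):ℂ) / s) with hE
  have hcomp' : ∀ (k : Fin s) (i l : Fin d),
      ∑ b : B, ∑ m : Fin s, β k m b i * (starRingEnd ℂ) (β k m b l)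
        = if i = l then (1:ℂ) else 0 := by
    intro k i l
    have h3 := congrFun (congrFun (hcomp k) i) l
    simpa [Matrix.sum_apply, Matrix.vecMulVec_apply, Matrix.one_apply, Pi.star_apply,
      Complex.star_def] using h3
  ext i l
  simp only [Matrix.sum_apply, Matrix.one_apply]
  calc
    ∑ b : B, ∑ t : Fin s, ((Mop β b t)ᴴ * Mop β b t) i l
      = ∑ b : B, ∑ t : Fin s, ∑ m : Fin s, ∑ k : Fin s, ∑ k' : Fin s,
          ((s:ℂ)⁻¹ * (s:ℂ)⁻¹) * (((starRingEnd ℂ) (E t k) * E t k')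
            * (β k m b i * (starRingEnd ℂ) (β k' m b l))) := by
        refine Finset.sum_congr rfl fun b _ => Finset.sum_congr rfl fun t _ => ?_
        rw [Matrix.mul_apply]
        refine Finset.sum_congr rfl fun m _ => ?_
        rw [Matrix.conjTranspose_apply, Mop_apply, Mop_apply, Complex.star_def,
          _root_.map_mul, map_inv₀, Complex.conj_natCast, map_sum]
        simp only [_root_.map_mul, Complex.conj_conj]
        rw [mul_mul_mul_comm, Finset.sum_mul_sum]
        rw [Finset.mul_sum]
        refine Finset.sum_congr rfl fun k _ => ?_
        rw [Finset.mul_sum]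
        refine Finset.sum_congr rfl fun k' _ => ?_
        ring
    _ = ∑ b : B, ∑ m : Fin s, ∑ k : Fin s, ∑ k' : Fin s,
          ((s:ℂ)⁻¹ * (s:ℂ)⁻¹) * ((if k = k' then (s:ℂ) else 0)
            * (β k m b i * (starRingEnd ℂ) (β k' m b l))) := by
        refine Finset.sum_congr rfl fun b _ => ?_
        rw [Finset.sum_comm]
        refine Finset.sum_congr rfl fun m _ => ?_
        rw [Finset.sum_comm]
        refine Finset.sum_congr rfl fun k _ => ?_
        rw [Finset.sum_comm]
        refine Finset.sum_congr rfl fun k' _ => ?_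
        rw [← exp_sum_key s hs k k', Finset.sum_mul, Finset.mul_sum]
    _ = ∑ b : B, ∑ m : Fin s, ∑ k : Fin s,
          (s:ℂ)⁻¹ * (β k m b i * (starRingEnd ℂ) (β k m b l)) := by
        refine Finset.sum_congr rfl fun b _ => Finset.sum_congr rfl fun m _ =>
          Finset.sum_congr rfl fun k _ => ?_
        rw [Finset.sum_eq_single k]
        · rw [if_pos rfl]
          field_simp
        · intro k' _ hk'; simp [Ne.symm hk']
        · simp
    _ = ∑ k : Fin s, ∑ b : B, ∑ m : Fin s,
          (s:ℂ)⁻¹ * (β k m b i * (starRingEnd ℂ) (β k m b l)) := by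
        calc ∑ b : B, ∑ m : Fin s, ∑ k : Fin s,
              (s:ℂ)⁻¹ * (β k m b i * (starRingEnd ℂ) (β k m b l))
            = ∑ b : B, ∑ k : Fin s, ∑ m : Fin s,
              (s:ℂ)⁻¹ * (β k m b i * (starRingEnd ℂ) (β k m b l)) :=
              Finset.sum_congr rfl fun b _ => Finset.sum_comm
          _ = ∑ k : Fin s, ∑ b : B, ∑ m : Fin s,
              (s:ℂ)⁻¹ * (β k m b i * (starRingEnd ℂ) (β k m b l)) := Finset.sum_comm
    _ = (s:ℂ)⁻¹ * ∑ k : Fin s, ∑ b : B, ∑ m : Fin s,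
          β k m b i * (starRingEnd ℂ) (β k m b l) := by
        simp only [Finset.mul_sum]
    _ = (s:ℂ)⁻¹ * ∑ k : Fin s, (if i = l then (1:ℂ) else 0) := by
        rw [Finset.sum_congr rfl fun k _ => hcomp' k i l]
    _ = if i = l then (1:ℂ) else 0 := by
        rw [Finset.sum_const, Finset.card_univ, Fintype.card_fin]
        rw [nsmul_eq_mul]
        field_simp
end
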